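/- Let R be a commutative ring, f ∈ R, u ∈ R a unit, and E a derivation of R with E(f) = f such that u + E(u) is a unit. Then the map δ ↦ δ − (δ(u)/(u + E(u)))·E is an R-module isomorphism from {derivations δ with δ(f) = 0} onto {derivations δ' with δ'(uf) = 0}. -/
import Mathlib


open scoped BigOperators

/-- Evaluation of a derivation at a fixed ring element, as an `R`-linear map on the
module of derivations.  Its kernel is `Der(−log₀ f) = {δ : δ f = 0}`. -/
def derEvalAt {R : Type*} [CommRing R] (f : R) : Derivation ℤ R R →ₗ[R] R where
  toFun δ := δ f
  map_add' := by intro δ₁ δ₂; simp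
  map_smul' := by intro r δ; simp

set_option maxRecDepth 8000 in
/-- The map `δ ↦ δ - (δ c * a) • E` as a linear map on derivations. -/
def derCorrect {R : Type*} [CommRing R] (c a : R) (E : Derivation ℤ R R) :
    Derivation ℤ R R →ₗ[R] Derivation ℤ R R where
  toFun δ := δ - (δ c * a) • E
  map_add' := by
    intro δ₁ δ₂
    ext x
    simp [add_mul, add_smul]
    ring
  map_smul' := by
    intro r δ
    ext x
    simp only [Derivation.sub_apply, Derivation.smul_apply, smul_eq_mul, RingHom.id_apply]
    ring

@[simp] lemma derCorrect_apply {R : Type*} [CommRing R] (c a : R) (E : Derivation ℤ R R)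
    (δ : Derivation ℤ R R) : derCorrect c a E δ = δ - (δ c * a) • E := rfl

/-- Let `R` be a commutative ring, `f ∈ R`, `u` a unit, and `E` a
derivation with `E f = f` such that `u + E u` is a unit.  Then
`δ ↦ δ − (δ u · (u + E u)⁻¹) • E` is an `R`-module isomorphism
`{δ : δ f = 0} ≃ {δ' : δ' (u f) = 0}`. -/
theorem stmt_4 {R : Type*} [CommRing R] (f u : R) (hu : IsUnit u)
    (E : Derivation ℤ R R) (hE : E f = f) (huE : IsUnit (u + E u)) :
    ∃ Φ : ↥(LinearMap.ker (derEvalAt f)) ≃ₗ[R] ↥(LinearMap.ker (derEvalAt (u * f))),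
      ∀ δ : ↥(LinearMap.ker (derEvalAt f)),
        (Φ δ : Derivation ℤ R R) =
          (δ : Derivation ℤ R R) -
            ((δ : Derivation ℤ R R) u * Ring.inverse (u + E u)) • E := by
  set v : R := u + E u with hv
  have hiv : v * Ring.inverse v = 1 := Ring.mul_inverse_cancel v huE
  have hiu : u * Ring.inverse u = 1 := Ring.mul_inverse_cancel u hu
  -- forward map at derivation level
  set Φ0 : Derivation ℤ R R →ₗ[R] Derivation ℤ R R := derCorrect u (Ring.inverse v) E with hΦ0
  -- inverse map at derivation level
  set Ψ0 : Derivation ℤ R R →ₗ[R] Derivation ℤ R R := derCorrect u (-(Ring.inverse u)) E with hΨ0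
  have hΦmem : ∀ δ ∈ LinearMap.ker (derEvalAt f), Φ0 δ ∈ LinearMap.ker (derEvalAt (u * f)) := by
    intro δ hδ
    have hδf : δ f = 0 := hδ
    simp only [LinearMap.mem_ker, derEvalAt, LinearMap.coe_mk, AddHom.coe_mk, hΦ0,
      derCorrect_apply, Derivation.sub_apply, Derivation.smul_apply, Derivation.leibniz,
      smul_eq_mul, hE, hδf]
    linear_combination (-(δ u * f)) * hiv
  have hΨmem : ∀ δ ∈ LinearMap.ker (derEvalAt (u * f)), Ψ0 δ ∈ LinearMap.ker (derEvalAt f) := by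
    intro δ hδ
    have hδf : u * δ f + f * δ u = 0 := by
      have := hδ
      simpa [derEvalAt, Derivation.leibniz, smul_eq_mul] using this
    simp only [LinearMap.mem_ker, derEvalAt, LinearMap.coe_mk, AddHom.coe_mk, hΨ0,
      derCorrect_apply, Derivation.sub_apply, Derivation.smul_apply, smul_eq_mul, hE]
    linear_combination (Ring.inverse u) * hδf - (δ f) * hiu
  have hΨΦ : ∀ δ : Derivation ℤ R R, Ψ0 (Φ0 δ) = δ := by
    intro δ
    ext x
    simp only [hΦ0, hΨ0, derCorrect_apply, Derivation.sub_apply, Derivation.smul_apply,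
      smul_eq_mul]
    have : δ u - δ u * Ring.inverse v * E u = δ u * Ring.inverse v * u := by
      linear_combination (-(δ u)) * hiv
    rw [this]
    linear_combination (δ u * Ring.inverse v * E x) * hiu
  have hΦΨ : ∀ δ : Derivation ℤ R R, Φ0 (Ψ0 δ) = δ := by
    intro δ
    ext x
    simp only [hΦ0, hΨ0, derCorrect_apply, Derivation.sub_apply, Derivation.smul_apply,
      smul_eq_mul]
    have : δ u - δ u * -(Ring.inverse u) * E u = δ u * Ring.inverse u * v := by
      simp only [hv]
      linear_combination (-(δ u)) * hiu
    rw [this]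
    linear_combination (-(δ u * Ring.inverse u * E x)) * hiv
  refine ⟨LinearEquiv.ofLinear (Φ0.restrict hΦmem) (Ψ0.restrict hΨmem) ?_ ?_, ?_⟩
  · refine LinearMap.ext fun δ => Subtype.ext ?_
    show Φ0 (Ψ0 (δ : Derivation ℤ R R)) = (δ : Derivation ℤ R R)
    exact hΦΨ _
  · refine LinearMap.ext fun δ => Subtype.ext ?_
    show Ψ0 (Φ0 (δ : Derivation ℤ R R)) = (δ : Derivation ℤ R R)
    exact hΨΦ _
  · intro δ
    rfl
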